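/- For the empirical logistic loss L(w) = (1/n)∑_{i=1}^n ln(1+exp(-y_i⟨x_i,w⟩)) with ‖x_i‖ ≤ 1 for all i, the gradient satisfies the self-bounding property ‖∇L(w)‖ ≤ min{1, L(w)} for every w ∈ ℝ^d. -/

import Mathlib

open scoped RealInnerProductSpace

lemma sigmoid_le_one (t : ℝ) : 1 / (1 + Real.exp t) ≤ 1 := by
  rw [div_le_one (by positivity)]
  have := Real.exp_pos t; linarith

lemma sigmoid_le_log (t : ℝ) : 1 / (1 + Real.exp t) ≤ Real.log (1 + Real.exp (-t)) := by
  have h1 : (0:ℝ) < 1 + Real.exp (-t) := by positivity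
  have h2 := Real.one_sub_inv_le_log_of_pos h1
  have h3 : 1 - (1 + Real.exp (-t))⁻¹ = 1 / (1 + Real.exp t) := by
    rw [Real.exp_neg]
    have he := Real.exp_pos t
    field_simp
    ring
  linarith [h2, h3 ▸ h2]

/-- Self-bounding gradient property of the empirical logistic loss with
normalized features: `‖∇L(w)‖ ≤ min {1, L(w)}`, where the gradient is
`∇L(w) = (1/n) ∑ i, (1/(1+exp(y_i⟨x_i,w⟫)))) • (-(y_i) • x_i)`. -/
theorem stmt_2 {d n : ℕ} (hn : 1 ≤ n) (x : Fin n → EuclideanSpace ℝ (Fin d))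
    (y : Fin n → ℝ) (hy : ∀ i, y i = 1 ∨ y i = -1)
    (hx : ∀ i, ‖x i‖ ≤ 1) (w : EuclideanSpace ℝ (Fin d)) :
    ‖(1 / (n : ℝ)) • ∑ i, (1 / (1 + Real.exp (y i * ⟪x i, w⟫))) • (-(y i) • x i)‖
      ≤ min 1 ((1 / (n : ℝ)) * ∑ i, Real.log (1 + Real.exp (-(y i * ⟪x i, w⟫)))) := by
  have hn0 : (0:ℝ) < n := by exact_mod_cast hn
  have hterm : ∀ i, ‖(1 / (1 + Real.exp (y i * ⟪x i, w⟫))) • (-(y i) • x i)‖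
      ≤ 1 / (1 + Real.exp (y i * ⟪x i, w⟫)) := by
    intro i
    rw [norm_smul, norm_smul, norm_neg]
    have hyi : ‖y i‖ = 1 := by rcases hy i with h | h <;> simp [h]
    have hpos : (0:ℝ) < 1 / (1 + Real.exp (y i * ⟪x i, w⟫)) := by positivity
    rw [hyi, one_mul, Real.norm_eq_abs, abs_of_pos hpos]
    nlinarith [hx i, norm_nonneg (x i)]
  have key : ∀ (b : Fin n → ℝ),
      (∀ i, 1 / (1 + Real.exp (y i * ⟪x i, w⟫)) ≤ b i) →
      ‖(1 / (n : ℝ)) • ∑ i, (1 / (1 + Real.exp (y i * ⟪x i, w⟫))) • (-(y i) • x i)‖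
        ≤ (1 / (n : ℝ)) * ∑ i, b i := by
    intro b hb
    rw [norm_smul, Real.norm_eq_abs, abs_of_pos (by positivity)]
    gcongr
    calc ‖∑ i, (1 / (1 + Real.exp (y i * ⟪x i, w⟫))) • (-(y i) • x i)‖
        ≤ ∑ i, ‖(1 / (1 + Real.exp (y i * ⟪x i, w⟫))) • (-(y i) • x i)‖ :=
          norm_sum_le _ _
      _ ≤ ∑ i, b i := Finset.sum_le_sum fun i _ => (hterm i).trans (hb i)
  refine le_min ?_ ?_
  · calc _ ≤ (1 / (n : ℝ)) * ∑ _i : Fin n, (1:ℝ) := key _ fun i => sigmoid_le_one _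
      _ = 1 := by field_simp; simp
  · exact key _ fun i => sigmoid_le_log _
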